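/- Let C = e₁C₁ ⊕ e₂C₂ ⊕ e₃C₃ ⊕ e₄C₄ be a linear code of length n over R. Then the minimum Lee distance of C satisfies d_L(C) = min{ d_H(C₁), 4·d_H(C₂), 2·d_H(C₃), 2·d_H(C₄) }. -/

import Mathlib

set_option synthInstance.maxHeartbeats 1000000
set_option maxHeartbeats 1000000

noncomputable section

open MvPolynomial

/-- Generators u^2-u, v^2-v of the defining ideal. -/
def genSet (F : Type) [Field F] : Set (MvPolynomial (Fin 2) F) :=
  {X 0 ^ 2 - X 0, X 1 ^ 2 - X 1}

/-- The ring R = F_q[u,v]/(u^2-u, v^2-v). -/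
abbrev Rq (F : Type) [Field F] := MvPolynomial (Fin 2) F ⧸ Ideal.span (genSet F)

/-- The image of u in R. -/
def uu (F : Type) [Field F] : Rq F := Ideal.Quotient.mk _ (X 0)

/-- The image of v in R. -/
def vv (F : Type) [Field F] : Rq F := Ideal.Quotient.mk _ (X 1)

/-- The idempotents e1 = 1-u-v+uv, e2 = uv, e3 = u-uv, e4 = v-uv. -/
def ee (F : Type) [Field F] : Fin 4 → Rq F :=
  ![1 - uu F - vv F + uu F * vv F, uu F * vv F, uu F - uu F * vv F, vv F - uu F * vv F]

/-- Evaluation of R at a point (x,y) with x^2 = x, y^2 = y. -/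
def phi4 (F : Type) [Field F] (p : Fin 2 → F) (hp : ∀ i, p i ^ 2 = p i) : Rq F →+* F :=
  Ideal.Quotient.lift _ (aeval p).toRingHom (by
    intro a ha
    have h : Ideal.span (genSet F) ≤ RingHom.ker (aeval p).toRingHom := by
      rw [Ideal.span_le]
      rintro g (rfl | rfl) <;> simp [RingHom.mem_ker, hp 0, hp 1]
    exact h ha)

/-- The projections φ₁, φ₂, φ₃, φ₄ : R → F_q sending a+bu+cv+duv to
a, a+b+c+d, a+b, a+c respectively (i.e. evaluation at (0,0),(1,1),(1,0),(0,1)). -/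
def phiI (F : Type) [Field F] : Fin 4 → (Rq F →+* F) :=
  ![phi4 F ![0,0] (by intro i; fin_cases i <;> norm_num),
    phi4 F ![1,1] (by intro i; fin_cases i <;> norm_num),
    phi4 F ![1,0] (by intro i; fin_cases i <;> norm_num),
    phi4 F ![0,1] (by intro i; fin_cases i <;> norm_num)]

/-- Hamming weight: the number of nonzero coordinates. -/
def hNorm {ι α : Type} [Fintype ι] [Zero α] (x : ι → α) : ℕ := Nat.card {i // x i ≠ 0}

/-- The Gray map R → F_q⁴, a+bu+cv+duv ↦ (d, c+d, b+d, a+b+c+d), written in terms of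
the projections φᵢ. -/
def gray1 (F : Type) [Field F] (r : Rq F) : Fin 4 → F :=
  ![phiI F 1 r - phiI F 2 r - phiI F 3 r + phiI F 0 r,
    phiI F 1 r - phiI F 2 r, phiI F 1 r - phiI F 3 r, phiI F 1 r]

/-- The Lee weight of a word over R: the Hamming weight of its Gray image. -/
def leeWt (F : Type) [Field F] {n : ℕ} (r : Fin n → Rq F) : ℕ :=
  ∑ j, hNorm (gray1 F (r j))

section Aux
variable (F : Type) [Field F]

lemma mk_sub_mem (p q : MvPolynomial (Fin 2) F) (h : p - q ∈ Ideal.span (genSet F)) :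
    (Ideal.Quotient.mk _ p : Rq F) = Ideal.Quotient.mk _ q :=
  Ideal.Quotient.eq.mpr h

lemma uu_sq : uu F * uu F = uu F := by
  rw [uu, ← map_mul]
  apply mk_sub_mem
  apply Ideal.subset_span
  left
  ring_nf

lemma vv_sq : vv F * vv F = vv F := by
  rw [vv, ← map_mul]
  apply mk_sub_mem
  apply Ideal.subset_span
  right
  ring_nf
  exact rfl

lemma phi_mk (p : Fin 2 → F) (hp : ∀ i, p i ^ 2 = p i) (q : MvPolynomial (Fin 2) F) :
    phi4 F p hp (Ideal.Quotient.mk _ q) = MvPolynomial.aeval p q :=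
  Ideal.Quotient.lift_mk _ _ _

lemma phi_uu (i : Fin 4) : phiI F i (uu F) = ![0,1,1,0] i := by
  fin_cases i <;> simp [phiI, uu, phi_mk]

lemma phi_vv (i : Fin 4) : phiI F i (vv F) = ![0,1,0,1] i := by
  fin_cases i <;> simp [phiI, vv, phi_mk]

lemma algMap_eq (a : F) :
    algebraMap F (Rq F) a = Ideal.Quotient.mk _ (MvPolynomial.C a) := rfl

lemma phi_algebraMap (i : Fin 4) (a : F) : phiI F i (algebraMap F (Rq F) a) = a := by
  fin_cases i <;> simp [phiI, algMap_eq, phi_mk]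

lemma phi_ee (i j : Fin 4) : phiI F j (ee F i) = if i = j then 1 else 0 := by
  fin_cases i <;> fin_cases j <;>
    simp [ee, map_sub, map_add, map_mul, phi_uu, phi_vv]

lemma mul_uu_mem (s : Rq F) (hs : s ∈ Submodule.span F {1, uu F, vv F, uu F * vv F}) :
    s * uu F ∈ Submodule.span F {1, uu F, vv F, uu F * vv F} := by
  induction hs using Submodule.span_induction with
  | mem x hx =>
    rcases hx with rfl | rfl | rfl | rfl
    · rw [one_mul]; exact Submodule.subset_span (by right; left; rfl)
    · rw [uu_sq]; exact Submodule.subset_span (by right; left; rfl)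
    · rw [mul_comm]; exact Submodule.subset_span (by right; right; right; rfl)
    · rw [mul_right_comm, uu_sq]
      exact Submodule.subset_span (by right; right; right; rfl)
  | zero => rw [zero_mul]; exact Submodule.zero_mem _
  | add x y _ _ hx hy => rw [add_mul]; exact Submodule.add_mem _ hx hy
  | smul a x _ hx => rw [smul_mul_assoc]; exact Submodule.smul_mem _ a hx

lemma mul_vv_mem (s : Rq F) (hs : s ∈ Submodule.span F {1, uu F, vv F, uu F * vv F}) :
    s * vv F ∈ Submodule.span F {1, uu F, vv F, uu F * vv F} := by
  induction hs using Submodule.span_induction with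
  | mem x hx =>
    rcases hx with rfl | rfl | rfl | rfl
    · rw [one_mul]; exact Submodule.subset_span (by right; right; left; rfl)
    · exact Submodule.subset_span (by right; right; right; rfl)
    · rw [vv_sq]; exact Submodule.subset_span (by right; right; left; rfl)
    · rw [mul_assoc, vv_sq]
      exact Submodule.subset_span (by right; right; right; rfl)
  | zero => rw [zero_mul]; exact Submodule.zero_mem _
  | add x y _ _ hx hy => rw [add_mul]; exact Submodule.add_mem _ hx hy
  | smul a x _ hx => rw [smul_mul_assoc]; exact Submodule.smul_mem _ a hx

lemma spanTop : Submodule.span F {1, uu F, vv F, uu F * vv F} = ⊤ := by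
  rw [eq_top_iff]
  rintro r -
  obtain ⟨p, rfl⟩ := Ideal.Quotient.mk_surjective r
  induction p using MvPolynomial.induction_on with
  | C a =>
    have h1 : (Ideal.Quotient.mk (Ideal.span (genSet F)) (MvPolynomial.C a) : Rq F)
        = a • (1 : Rq F) := by
      rw [← algMap_eq, Algebra.algebraMap_eq_smul_one]
    rw [h1]
    exact Submodule.smul_mem _ a (Submodule.subset_span (by left; rfl))
  | add p q hp hq => rw [map_add]; exact Submodule.add_mem _ hp hq
  | mul_X p i hp =>
    rw [map_mul]
    fin_cases i
    · exact mul_uu_mem F _ hp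
    · exact mul_vv_mem F _ hp

lemma phi_smul (i : Fin 4) (a : F) (r : Rq F) :
    phiI F i (a • r) = a * phiI F i r := by
  rw [Algebra.smul_def a r, map_mul, phi_algebraMap]

lemma decomp (r : Rq F) :
    r = ∑ i : Fin 4, algebraMap F (Rq F) (phiI F i r) * ee F i := by
  have hr : r ∈ Submodule.span F {1, uu F, vv F, uu F * vv F} := by
    rw [spanTop]; trivial
  induction hr using Submodule.span_induction with
  | mem x hx =>
    rcases hx with rfl | rfl | rfl | rfl
    · simp only [map_one, Fin.sum_univ_four, phi_ee, map_zero, ee]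
      simp
      ring
    · simp only [Fin.sum_univ_four, phi_uu, ee]
      simp
    · simp only [Fin.sum_univ_four, phi_vv, ee]
      simp
    · have huv : ∀ i : Fin 4, phiI F i (uu F * vv F) = ![0,1,0,0] i := by
        intro i; rw [map_mul, phi_uu, phi_vv]; fin_cases i <;> simp
      simp only [Fin.sum_univ_four, huv, ee]
      simp
  | zero => simp
  | add x y _ _ hx hy =>
    simp only [map_add, add_mul, Finset.sum_add_distrib, ← hx, ← hy]
  | smul a x _ hx =>
    have sd : ∀ z : Rq F, a • z = algebraMap F (Rq F) a * z := fun z => Algebra.smul_def a z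
    simp only [phi_smul, map_mul, mul_assoc, ← sd, smul_mul_assoc, ← Finset.smul_sum, ← hx]

lemma eq_zero_of_phi (r : Rq F) (h : ∀ i, phiI F i r = 0) : r = 0 := by
  rw [decomp F r]
  simp [h]

end Aux

open scoped Classical

lemma hNorm_eq_sum {ι α : Type} [Fintype ι] [Zero α] (x : ι → α) :
    hNorm x = ∑ i, if x i ≠ 0 then 1 else 0 := by
  rw [hNorm, Nat.card_eq_fintype_card, Fintype.card_subtype, Finset.card_filter]

lemma one_le_ind2 {F : Type} [Field F] (s t w : F) (hw : w ≠ 0) (h : s - t = w) :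
    1 ≤ (if s ≠ 0 then 1 else 0) + (if t ≠ 0 then 1 else 0) := by
  split_ifs <;> try omega
  exfalso
  apply hw
  rw [← h]
  simp_all

lemma one_le_ind4 {F : Type} [Field F] (s t u v w : F) (hw : w ≠ 0) (h : s - t - u + v = w) :
    1 ≤ (if s ≠ 0 then 1 else 0) + (if t ≠ 0 then 1 else 0)
      + (if u ≠ 0 then 1 else 0) + (if v ≠ 0 then 1 else 0) := by
  split_ifs <;> try omega
  exfalso
  apply hw
  rw [← h]
  simp_all

lemma hNorm_gray (F : Type) [Field F] (r : Rq F) :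
    hNorm (gray1 F r) =
      (if phiI F 1 r - phiI F 2 r - phiI F 3 r + phiI F 0 r ≠ 0 then 1 else 0)
        + (if phiI F 1 r - phiI F 2 r ≠ 0 then 1 else 0)
        + (if phiI F 1 r - phiI F 3 r ≠ 0 then 1 else 0)
        + (if phiI F 1 r ≠ 0 then 1 else 0) := by
  rw [hNorm_eq_sum, Fin.sum_univ_four]
  simp [gray1]
  by_cases ha : phiI F 1 r - phiI F 2 r - phiI F 3 r + phiI F 0 r = 0 <;>
    by_cases hb : phiI F 1 r - phiI F 2 r = 0 <;>
    by_cases hc : phiI F 1 r - phiI F 3 r = 0 <;>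
    by_cases hd : phiI F 1 r = 0 <;> simp [ha, hb, hc, hd]


theorem stmt17 (F : Type) [Field F] [Fintype F] (n : ℕ)
    (C : Submodule (Rq F) (Fin n → Rq F))
    (Ci : Fin 4 → Submodule F (Fin n → F))
    (hC : ∀ s : Fin n → Rq F, s ∈ C ↔ ∀ i : Fin 4, (phiI F i) ∘ s ∈ Ci i)
    (hCi : ∀ i, Ci i ≠ ⊥)
    (d : Fin 4 → ℕ)
    (hd : ∀ i, IsLeast {k | ∃ c ∈ Ci i, c ≠ 0 ∧ hNorm c = k} (d i)) :
    IsLeast {k | ∃ c ∈ C, c ≠ 0 ∧ leeWt F c = k}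
      (min (d 0) (min (4 * d 1) (min (2 * d 2) (2 * d 3)))) := by
  classical
  constructor
  · -- membership
    have exists_word : ∀ i : Fin 4, ∀ c0 : Fin n → F, c0 ∈ Ci i → c0 ≠ 0 →
        ∃ w ∈ C, w ≠ 0 ∧ leeWt F w = ![1,4,2,2] i * hNorm c0 := by
      intro i c0 hc hc0
      refine ⟨fun j => algebraMap F (Rq F) (c0 j) * ee F i, ?_, ?_, ?_⟩
      · rw [hC]
        intro k
        have hk : (phiI F k) ∘ (fun j => algebraMap F (Rq F) (c0 j) * ee F i)
            = if i = k then c0 else (0 : Fin n → F) := by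
          funext j
          by_cases h : i = k <;>
            simp [h, Function.comp, map_mul, phi_algebraMap, phi_ee]
        rw [hk]
        by_cases h : i = k
        · rw [if_pos h]; exact h ▸ hc
        · rw [if_neg h]; exact (Ci k).zero_mem
      · intro hzero
        obtain ⟨j, hj⟩ := Function.ne_iff.mp hc0
        apply hj
        have h2 : algebraMap F (Rq F) (c0 j) * ee F i = 0 := by
          simpa using congrFun hzero j
        have h3 := congrArg (phiI F i) h2
        rw [map_mul, phi_algebraMap, phi_ee, if_pos rfl, mul_one, map_zero] at h3
        simpa using h3
      · have hg : ∀ j, hNorm (gray1 F (algebraMap F (Rq F) (c0 j) * ee F i))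
            = ![1,4,2,2] i * (if c0 j ≠ 0 then 1 else 0) := by
          intro j
          have hphi : ∀ k : Fin 4, phiI F k (algebraMap F (Rq F) (c0 j) * ee F i)
              = if i = k then c0 j else 0 := by
            intro k; rw [map_mul, phi_algebraMap, phi_ee]; split_ifs <;> ring
          rw [hNorm_gray, hphi 0, hphi 1, hphi 2, hphi 3]
          fin_cases i <;>
          · simp
            try (split_ifs <;> simp_all)
        have hsum : leeWt F (fun j => algebraMap F (Rq F) (c0 j) * ee F i)
            = ∑ j, ![1,4,2,2] i * (if c0 j ≠ 0 then 1 else 0) := by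
          rw [leeWt]; exact Finset.sum_congr rfl fun j _ => hg j
        rw [hsum, ← Finset.mul_sum, ← hNorm_eq_sum]
    obtain ⟨c0, hc0, hne0, hdd0⟩ := (hd 0).1
    obtain ⟨c1, hc1, hne1, hdd1⟩ := (hd 1).1
    obtain ⟨c2, hc2, hne2, hdd2⟩ := (hd 2).1
    obtain ⟨c3, hc3, hne3, hdd3⟩ := (hd 3).1
    have m0 : d 0 ∈ {k | ∃ c ∈ C, c ≠ 0 ∧ leeWt F c = k} := by
      obtain ⟨w, h1, h2, h3⟩ := exists_word 0 c0 hc0 hne0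
      exact ⟨w, h1, h2, by rw [h3, hdd0]; norm_num⟩
    have m1 : 4 * d 1 ∈ {k | ∃ c ∈ C, c ≠ 0 ∧ leeWt F c = k} := by
      obtain ⟨w, h1, h2, h3⟩ := exists_word 1 c1 hc1 hne1
      exact ⟨w, h1, h2, by rw [h3, hdd1]; norm_num⟩
    have m2 : 2 * d 2 ∈ {k | ∃ c ∈ C, c ≠ 0 ∧ leeWt F c = k} := by
      obtain ⟨w, h1, h2, h3⟩ := exists_word 2 c2 hc2 hne2
      exact ⟨w, h1, h2, by rw [h3, hdd2]; norm_num; exact Or.inl rfl⟩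
    have m3 : 2 * d 3 ∈ {k | ∃ c ∈ C, c ≠ 0 ∧ leeWt F c = k} := by
      obtain ⟨w, h1, h2, h3⟩ := exists_word 3 c3 hc3 hne3
      exact ⟨w, h1, h2, by rw [h3, hdd3]; norm_num; exact Or.inl rfl⟩
    have hcases : min (d 0) (min (4 * d 1) (min (2 * d 2) (2 * d 3))) = d 0
        ∨ min (d 0) (min (4 * d 1) (min (2 * d 2) (2 * d 3))) = 4 * d 1
        ∨ min (d 0) (min (4 * d 1) (min (2 * d 2) (2 * d 3))) = 2 * d 2
        ∨ min (d 0) (min (4 * d 1) (min (2 * d 2) (2 * d 3))) = 2 * d 3 := by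
      omega
    rcases hcases with h | h | h | h <;> rw [h] <;> assumption
  · -- lower bound
    rintro k ⟨c, hcC, hc0, rfl⟩
    have hx : ∀ i : Fin 4, (phiI F i) ∘ c ∈ Ci i := (hC c).mp hcC
    obtain ⟨x, hxdef⟩ : ∃ x : Fin 4 → Fin n → F, ∀ i j, x i j = phiI F i (c j) :=
      ⟨fun i j => phiI F i (c j), fun _ _ => rfl⟩
    have hxi : ∀ i, x i = (phiI F i) ∘ c := fun i => funext fun j => hxdef i j
    have hxmem : ∀ i, x i ∈ Ci i := fun i => (hxi i) ▸ hx i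
    have hbound : ∀ i, x i ≠ 0 → d i ≤ hNorm (x i) :=
      fun i h => (hd i).2 ⟨x i, hxmem i, h, rfl⟩
    have hlee : leeWt F c = ∑ j,
        ((if x 1 j - x 2 j - x 3 j + x 0 j ≠ 0 then 1 else 0)
          + (if x 1 j - x 2 j ≠ 0 then 1 else 0)
          + (if x 1 j - x 3 j ≠ 0 then 1 else 0)
          + (if x 1 j ≠ 0 then 1 else 0)) := by
      rw [leeWt]
      refine Finset.sum_congr rfl fun j _ => ?_
      rw [hNorm_gray]
      simp only [hxdef]
    by_cases h0 : x 0 ≠ 0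
    · have hb : hNorm (x 0) ≤ leeWt F c := by
        rw [hlee, hNorm_eq_sum]
        refine Finset.sum_le_sum fun j _ => ?_
        rcases eq_or_ne (x 0 j) 0 with hj | hj
        · simp [hj]
        · rw [if_pos hj]
          exact one_le_ind4 (x 1 j - x 2 j - x 3 j + x 0 j) (x 1 j - x 2 j)
            (x 1 j - x 3 j) (x 1 j) (x 0 j) hj (by ring)
      have := hbound 0 h0
      omega
    push_neg at h0
    by_cases h2 : x 2 ≠ 0
    · have hb : 2 * hNorm (x 2) ≤ leeWt F c := by
        rw [hlee, hNorm_eq_sum, Finset.mul_sum]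
        refine Finset.sum_le_sum fun j _ => ?_
        have h0j : x 0 j = 0 := by rw [h0]; rfl
        rcases eq_or_ne (x 2 j) 0 with hj | hj
        · simp [hj]
        · rw [if_pos hj]
          have ha := one_le_ind2 (x 1 j) (x 1 j - x 2 j) (x 2 j) hj (by ring)
          have hb2 := one_le_ind2 (x 1 j - x 3 j) (x 1 j - x 2 j - x 3 j + x 0 j) (x 2 j) hj
            (by rw [h0j]; ring)
          omega
      have := hbound 2 h2
      omega
    push_neg at h2
    by_cases h3 : x 3 ≠ 0
    · have hb : 2 * hNorm (x 3) ≤ leeWt F c := by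
        rw [hlee, hNorm_eq_sum, Finset.mul_sum]
        refine Finset.sum_le_sum fun j _ => ?_
        have h0j : x 0 j = 0 := by rw [h0]; rfl
        rcases eq_or_ne (x 3 j) 0 with hj | hj
        · simp [hj]
        · rw [if_pos hj]
          have ha := one_le_ind2 (x 1 j) (x 1 j - x 3 j) (x 3 j) hj (by ring)
          have hb2 := one_le_ind2 (x 1 j - x 2 j) (x 1 j - x 2 j - x 3 j + x 0 j) (x 3 j) hj
            (by rw [h0j]; ring)
          omega
      have := hbound 3 h3
      omega
    push_neg at h3
    have h1 : x 1 ≠ 0 := by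
      intro h1
      apply hc0
      funext j
      apply eq_zero_of_phi
      intro i
      have z : ∀ i' : Fin 4, x i' = 0 → phiI F i' (c j) = 0 := fun i' hz => by
        rw [← hxdef i' j, hz]; rfl
      fin_cases i
      · exact z 0 h0
      · exact z 1 h1
      · exact z 2 h2
      · exact z 3 h3
    have hb : 4 * hNorm (x 1) ≤ leeWt F c := by
      rw [hlee, hNorm_eq_sum, Finset.mul_sum]
      refine Finset.sum_le_sum fun j _ => ?_
      have h0j : x 0 j = 0 := by rw [h0]; rfl
      have h2j : x 2 j = 0 := by rw [h2]; rfl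
      have h3j : x 3 j = 0 := by rw [h3]; rfl
      simp only [h0j, h2j, h3j, sub_zero, add_zero]
      split_ifs <;> omega
    have := hbound 1 h1
    omega
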